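/- Let A be an essentially small abelian symmetric monoidal category in which every object is ⊗-flat and strongly dualizable ('rigid abelian'). Let S ⊆ A be a ⊗-multiplicative class of objects (𝟙 ∈ S, S ⊗ S ⊆ S) and B₀ ⊆ A a Serre ⊗-ideal with B₀ ∩ S = ∅. Then there exists a maximal proper Serre ⊗-ideal B of A with B₀ ⊆ B and B ∩ S = ∅. -/

import Mathlib

open CategoryTheory CategoryTheory.Limits CategoryTheory.MonoidalCategory
  CategoryTheory.Pretriangulated

namespace Balmer

universe w v u v₂ u₂ v₃ u₃ v₄ u₄

variable {C : Type u} [Category.{v} C]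

/-- An object is finitely presented if its coYoneda functor preserves filtered colimits. -/
def IsFP (X : C) : Prop :=
  ∀ (J : Type v) [SmallCategory J] [IsFiltered J],
    Nonempty (PreservesColimitsOfShape J (coyoneda.obj (Opposite.op X)))

section Monoidal
variable [MonoidalCategory C]

/-- `n`-fold tensor power of an object. -/
def tpow (x : C) : ℕ → C
  | 0 => 𝟙_ C
  | n + 1 => x ⊗ tpow x n

/-- `n`-fold tensor power of a morphism. -/
def tpowHom {x y : C} (f : x ⟶ y) : ∀ n, tpow x n ⟶ tpow y n
  | 0 => 𝟙 _
  | n + 1 => f ⊗ₘ tpowHom f n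

/-- `n`-fold tensor power of a morphism out of the unit, as a morphism out of the unit. -/
def upow {z : C} (g : 𝟙_ C ⟶ z) : ∀ n, 𝟙_ C ⟶ tpow z n
  | 0 => 𝟙 _
  | n + 1 => (λ_ (𝟙_ C)).inv ≫ (g ⊗ₘ upow g n)

/-- A ⊗-multiplicative class of objects: contains the unit and is closed under `⊗`. -/
def IsTensorMultiplicative (S : Set C) : Prop :=
  𝟙_ C ∈ S ∧ ∀ ⦃a⦄, a ∈ S → ∀ ⦃b⦄, b ∈ S → (a ⊗ b) ∈ S

end Monoidal

section SerrePlain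
variable [Abelian C]

/-- A Serre subcategory (as a class of objects): contains the zeros and is closed under
subobjects, quotients and extensions. -/
def IsSerre (B : Set C) : Prop :=
  (∀ X : C, IsZero X → X ∈ B) ∧
  (∀ ⦃X Y : C⦄ (i : X ⟶ Y), Mono i → Y ∈ B → X ∈ B) ∧
  (∀ ⦃X Y : C⦄ (p : X ⟶ Y), Epi p → X ∈ B → Y ∈ B) ∧
  (∀ S : ShortComplex C, S.ShortExact → S.X₁ ∈ B → S.X₃ ∈ B → S.X₂ ∈ B)

end SerrePlain

section SerrePlain2
variable [Abelian C]

/-- A Serre subcategory closed under (small) coproducts (no tensor). -/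
def IsLocalizingSub (L : Set C) : Prop :=
  IsSerre L ∧ ∀ (J : Type v) (g : J → C) [HasCoproduct g], (∀ j, g j ∈ L) → (∐ g) ∈ L

/-- The localizing subcategory generated by a class of objects (no tensor). -/
def LocSubGen (S : Set C) : Set C :=
  {M | ∀ L : Set C, IsLocalizingSub L → S ⊆ L → M ∈ L}

end SerrePlain2

section Serre
variable [Abelian C] [MonoidalCategory C]

/-- A Serre ⊗-ideal: a Serre subcategory closed under tensoring with arbitrary objects. -/
def IsSerreTensorIdeal (B : Set C) : Prop :=
  IsSerre B ∧ ∀ (X : C) ⦃M : C⦄, M ∈ B → (X ⊗ M) ∈ B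

/-- A maximal proper Serre ⊗-ideal. -/
def IsMaxSerreTensorIdeal (B : Set C) : Prop :=
  IsSerreTensorIdeal B ∧ 𝟙_ C ∉ B ∧
    ∀ B' : Set C, IsSerreTensorIdeal B' → 𝟙_ C ∉ B' → B ⊆ B' → B' = B

/-- The Serre ⊗-ideal generated by a class of objects. -/
def SerreTensorGen (S : Set C) : Set C :=
  {M | ∀ L : Set C, IsSerreTensorIdeal L → S ⊆ L → M ∈ L}

/-- A localizing ⊗-ideal: a Serre ⊗-ideal closed under (small) coproducts. -/
def IsLocalizingTensorIdeal (L : Set C) : Prop :=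
  IsSerreTensorIdeal L ∧
    ∀ (J : Type v) (g : J → C) [HasCoproduct g], (∀ j, g j ∈ L) → (∐ g) ∈ L

/-- The localizing ⊗-ideal generated by a class of objects. -/
def LocTensorGen (S : Set C) : Set C :=
  {M | ∀ L : Set C, IsLocalizingTensorIdeal L → S ⊆ L → M ∈ L}

/-- A Serre ⊗-ideal of the full (abelian, monoidal) subcategory of objects in `P`
(e.g. `P` = finitely presented objects). -/
def IsSerreTensorIdealIn (P B : Set C) : Prop :=
  B ⊆ P ∧
  (∀ X : C, IsZero X → X ∈ P → X ∈ B) ∧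
  (∀ ⦃X Y : C⦄ (i : X ⟶ Y), Mono i → X ∈ P → Y ∈ B → X ∈ B) ∧
  (∀ ⦃X Y : C⦄ (p : X ⟶ Y), Epi p → Y ∈ P → X ∈ B → Y ∈ B) ∧
  (∀ S : ShortComplex C, S.ShortExact → S.X₂ ∈ P → S.X₁ ∈ B → S.X₃ ∈ B → S.X₂ ∈ B) ∧
  (∀ ⦃X : C⦄, X ∈ P → ∀ ⦃M : C⦄, M ∈ B → (X ⊗ M) ∈ B)

/-- A maximal proper Serre ⊗-ideal of the full subcategory of objects in `P`. -/
def IsMaxSerreTensorIdealIn (P B : Set C) : Prop :=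
  IsSerreTensorIdealIn P B ∧ 𝟙_ C ∉ B ∧
    ∀ B' : Set C, IsSerreTensorIdealIn P B' → 𝟙_ C ∉ B' → B ⊆ B' → B' = B

end Serre

section Tri
variable [Preadditive C] [HasZeroObject C] [HasShift C ℤ]
  [∀ n : ℤ, (shiftFunctor C n).Additive] [Pretriangulated C] [MonoidalCategory C]

/-- A thick ⊗-ideal of a tensor-triangulated category. -/
def IsThickTensorIdeal (P : Set C) : Prop :=
  (∀ ⦃x y : C⦄, (x ≅ y) → x ∈ P → y ∈ P) ∧
  (∀ (x : C) (n : ℤ), x ∈ P → (shiftFunctor C n).obj x ∈ P) ∧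
  (∀ T : Triangle C, T ∈ (distTriang C) → T.obj₁ ∈ P → T.obj₂ ∈ P → T.obj₃ ∈ P) ∧
  (∀ x y : C, (∃ (i : x ⟶ y) (r : y ⟶ x), i ≫ r = 𝟙 x) → y ∈ P → x ∈ P) ∧
  (∀ (x : C) ⦃y : C⦄, y ∈ P → (x ⊗ y) ∈ P)

/-- A prime thick ⊗-ideal. -/
def IsPrimeThickTensorIdeal (P : Set C) : Prop :=
  IsThickTensorIdeal P ∧ (∃ x : C, x ∉ P) ∧
    ∀ x y : C, (x ⊗ y) ∈ P → x ∈ P ∨ y ∈ P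

end Tri

section Aux

variable {A : Type u} [Category.{v} A] [Abelian A] [MonoidalCategory A]
    [SymmetricCategory A] [MonoidalPreadditive A]

lemma aux_iso_mem {B : Set A} (hB : IsSerre B) {X Y : A} (e : X ≅ Y) (hY : Y ∈ B) : X ∈ B :=
  hB.2.1 e.hom inferInstance hY

section Flat
variable [∀ X : A, PreservesFiniteColimits (tensorLeft X)]
    [∀ X : A, PreservesFiniteLimits (tensorLeft X)]

lemma aux_mono_whisker (x : A) {X Y : A} (f : X ⟶ Y) [Mono f] : Mono (x ◁ f) := by
  have := (tensorLeft x).map_mono f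
  simpa using this

lemma aux_epi_whisker (x : A) {X Y : A} (f : X ⟶ Y) [Epi f] : Epi (x ◁ f) := by
  have := (tensorLeft x).map_epi f
  simpa using this

/-- The "saturation" of a Serre ⊗-ideal `B` by a ⊗-multiplicative class `S` is again a
Serre ⊗-ideal. -/
lemma aux_sat {S : Set A} (hS : IsTensorMultiplicative S) {B : Set A}
    (hB : IsSerreTensorIdeal B) :
    IsSerreTensorIdeal {M : A | ∃ x ∈ S, (x ⊗ M) ∈ B} := by
  obtain ⟨hSerre, hIdeal⟩ := hB
  refine ⟨⟨?_, ?_, ?_, ?_⟩, ?_⟩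
  · intro X hX
    refine ⟨𝟙_ A, hS.1, hSerre.1 _ ?_⟩
    rw [IsZero.iff_id_eq_zero] at hX ⊢
    calc 𝟙 (𝟙_ A ⊗ X) = 𝟙_ A ◁ 𝟙 X := by simp
    _ = 0 := by rw [hX, MonoidalPreadditive.whiskerLeft_zero]
  · rintro X Y i hi ⟨x, hx, hxY⟩
    haveI : Mono i := hi
    haveI : Mono (x ◁ i) := aux_mono_whisker x i
    exact ⟨x, hx, hSerre.2.1 (x ◁ i) inferInstance hxY⟩
  · rintro X Y p hp ⟨x, hx, hxX⟩
    haveI : Epi p := hp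
    haveI : Epi (x ◁ p) := aux_epi_whisker x p
    exact ⟨x, hx, hSerre.2.2.1 (x ◁ p) inferInstance hxX⟩
  · rintro T hT ⟨x, hx, hx1⟩ ⟨y, hy, hy3⟩
    refine ⟨x ⊗ y, hS.2 hx hy, ?_⟩
    have hmap : (T.map (tensorLeft (x ⊗ y))).ShortExact :=
      hT.map_of_exact (tensorLeft (x ⊗ y))
    have e1 : ((x ⊗ y) ⊗ T.X₁) ∈ B :=
      aux_iso_mem hSerre ((whiskerRightIso (β_ x y) T.X₁) ≪≫ α_ y x T.X₁) (hIdeal y hx1)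
    have e3 : ((x ⊗ y) ⊗ T.X₃) ∈ B :=
      aux_iso_mem hSerre (α_ x y T.X₃) (hIdeal x hy3)
    exact hSerre.2.2.2 (T.map (tensorLeft (x ⊗ y))) hmap e1 e3
  · rintro X M ⟨x, hx, hxM⟩
    refine ⟨x, hx, aux_iso_mem hSerre ?_ (hIdeal X hxM)⟩
    exact (α_ x X M).symm ≪≫ whiskerRightIso (β_ x X) M ≪≫ α_ X x M

/-- If `x` is rigid (with right dual) then `x ⊗ ker (η_x)` is zero. -/
lemma aux_ker_coev_zero (x : A) [HasRightDual x] :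
    IsZero (x ⊗ kernel (η_ x (xᘁ))) := by
  have h1 : (η_ x (xᘁ) ▷ x) ≫ ((α_ x (xᘁ) x).hom ≫ x ◁ ε_ x (xᘁ)) =
      (λ_ x).hom ≫ (ρ_ x).inv := by
    simpa [Category.assoc] using ExactPairing.evaluation_coevaluation (X := x) (Y := xᘁ)
  haveI hm : Mono (η_ x (xᘁ) ▷ x) := by
    have : Mono ((η_ x (xᘁ) ▷ x) ≫ ((α_ x (xᘁ) x).hom ≫ x ◁ ε_ x (xᘁ))) := by
      rw [h1]; infer_instance
    exact mono_of_mono _ ((α_ x (xᘁ) x).hom ≫ x ◁ ε_ x (xᘁ))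
  haveI hwl : Mono (x ◁ η_ x (xᘁ)) := by
    have hcomp : (x ◁ η_ x (xᘁ)) ≫ (β_ x (x ⊗ xᘁ)).hom =
        (β_ x (𝟙_ A)).hom ≫ (η_ x (xᘁ) ▷ x) :=
      BraidedCategory.braiding_naturality_right x (η_ x (xᘁ))
    have : Mono ((x ◁ η_ x (xᘁ)) ≫ (β_ x (x ⊗ xᘁ)).hom) := by
      rw [hcomp]; exact mono_comp _ _
    exact mono_of_mono _ (β_ x (x ⊗ xᘁ)).hom
  have hk : (x ◁ kernel.ι (η_ x (xᘁ))) ≫ (x ◁ η_ x (xᘁ)) = 0 := by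
    rw [← MonoidalCategory.whiskerLeft_comp, kernel.condition,
      MonoidalPreadditive.whiskerLeft_zero]
  have hι0 : (x ◁ kernel.ι (η_ x (xᘁ))) = 0 :=
    (cancel_mono (x ◁ η_ x (xᘁ))).1 (by rw [hk, zero_comp])
  haveI : Mono (x ◁ kernel.ι (η_ x (xᘁ))) := aux_mono_whisker x _
  rw [IsZero.iff_id_eq_zero]
  exact (cancel_mono (x ◁ kernel.ι (η_ x (xᘁ)))).1 (by rw [hι0, comp_zero, zero_comp])

end Flat

/-- The canonical short exact sequence `0 → ker f → X → coim f → 0`. -/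
lemma aux_coimage_ses {X Y : A} (f : X ⟶ Y) :
    (ShortComplex.mk (kernel.ι f) (Abelian.coimage.π f)
      (cokernel.condition (kernel.ι f))).ShortExact := by
  refine ⟨ShortComplex.exact_of_g_is_cokernel _ ?_⟩
  exact cokernelIsCokernel (kernel.ι f)

end Aux

/-- (Abelian analogue of Balmer's Lemma 3.8.) In an essentially small rigid
abelian symmetric monoidal category in which every object is ⊗-flat, given a ⊗-multiplicative
class `S` and a Serre ⊗-ideal `B₀` disjoint from `S`, there exists a *maximal proper* Serre
⊗-ideal `B` with `B₀ ⊆ B` and `B ∩ S = ∅`. -/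
theorem stmt8 {A : Type u} [Category.{v} A] [Abelian A] [MonoidalCategory A]
    [SymmetricCategory A] [MonoidalPreadditive A] [RigidCategory A] [EssentiallySmall.{w} A]
    [∀ X : A, PreservesFiniteColimits (tensorLeft X)]
    [∀ X : A, PreservesFiniteLimits (tensorLeft X)]
    (S : Set A) (hS : IsTensorMultiplicative S)
    (B₀ : Set A) (hB₀ : IsSerreTensorIdeal B₀) (hdisj : B₀ ∩ S = ∅) :
    ∃ B : Set A, IsMaxSerreTensorIdeal B ∧ B₀ ⊆ B ∧ B ∩ S = ∅ := by
  classical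
  set P : Set (Set A) := {B | IsSerreTensorIdeal B ∧ B₀ ⊆ B ∧ B ∩ S = ∅} with hP
  have hB₀P : B₀ ∈ P := ⟨hB₀, subset_rfl, hdisj⟩
  have hchain_cond : ∀ c ⊆ P, IsChain (· ⊆ ·) c → c.Nonempty →
      ∃ ub ∈ P, ∀ s ∈ c, s ⊆ ub := by
    rintro c hcP hchain ⟨s₀, hs₀⟩
    refine ⟨⋃₀ c, ⟨⟨⟨?_, ?_, ?_, ?_⟩, ?_⟩, ?_, ?_⟩, fun s hs => Set.subset_sUnion_of_mem hs⟩
    · intro X hX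
      exact Set.mem_sUnion.2 ⟨s₀, hs₀, ((hcP hs₀).1.1.1 X hX)⟩
    · rintro X Y i hi ⟨s, hs, hYs⟩
      exact ⟨s, hs, (hcP hs).1.1.2.1 i hi hYs⟩
    · rintro X Y p hp ⟨s, hs, hXs⟩
      exact ⟨s, hs, (hcP hs).1.1.2.2.1 p hp hXs⟩
    · rintro T hT ⟨s, hs, h1⟩ ⟨t, ht, h3⟩
      rcases hchain.total hs ht with hst | hts
      · exact ⟨t, ht, (hcP ht).1.1.2.2.2 T hT (hst h1) h3⟩
      · exact ⟨s, hs, (hcP hs).1.1.2.2.2 T hT h1 (hts h3)⟩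
    · rintro X M ⟨s, hs, hMs⟩
      exact ⟨s, hs, (hcP hs).1.2 X hMs⟩
    · exact (hcP hs₀).2.1.trans (Set.subset_sUnion_of_mem hs₀)
    · rw [Set.eq_empty_iff_forall_notMem]
      rintro m ⟨⟨s, hs, hms⟩, hmS⟩
      have := (hcP hs).2.2
      rw [Set.eq_empty_iff_forall_notMem] at this
      exact this m ⟨hms, hmS⟩
  obtain ⟨B, hB₀B, hBmax⟩ := zorn_subset_nonempty P hchain_cond B₀ hB₀P
  have hBP : B ∈ P := hBmax.1
  obtain ⟨⟨hBSerre, hBIdeal⟩, hB₀B', hBS⟩ := hBP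
  have hunit : 𝟙_ A ∉ B := by
    intro h
    rw [Set.eq_empty_iff_forall_notMem] at hBS
    exact hBS (𝟙_ A) ⟨h, hS.1⟩
  -- The saturation B'' equals B.
  set B'' : Set A := {M : A | ∃ x ∈ S, (x ⊗ M) ∈ B} with hB''def
  have hsub : B ⊆ B'' := fun M hM => ⟨𝟙_ A, hS.1, hBIdeal (𝟙_ A) hM⟩
  have hB''P : B'' ∈ P := by
    refine ⟨aux_sat hS ⟨hBSerre, hBIdeal⟩, hB₀B'.trans hsub, ?_⟩
    rw [Set.eq_empty_iff_forall_notMem]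
    rintro m ⟨⟨x, hx, hxm⟩, hmS⟩
    rw [Set.eq_empty_iff_forall_notMem] at hBS
    exact hBS (x ⊗ m) ⟨hxm, hS.2 hx hmS⟩
  have hEq : B'' = B := (hBmax.2 hB''P hsub).antisymm hsub
  -- For every x ∈ S, the kernel of the coevaluation lies in B.
  have hker : ∀ x ∈ S, kernel (η_ x (xᘁ)) ∈ B := by
    intro x hx
    rw [← hEq]
    exact ⟨x, hx, hBSerre.1 _ (aux_ker_coev_zero x)⟩
  refine ⟨B, ⟨⟨hBSerre, hBIdeal⟩, hunit, ?_⟩, hB₀B, hBS⟩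
  intro B' hB' hB'unit hBB'
  have hB'S : B' ∩ S = ∅ := by
    rw [Set.eq_empty_iff_forall_notMem]
    rintro x ⟨hx1, hx2⟩
    -- x ⊗ xᘁ ∈ B'
    have hdual : (x ⊗ xᘁ) ∈ B' :=
      aux_iso_mem hB'.1 (β_ x (xᘁ)) (hB'.2 (xᘁ) hx1)
    -- the coimage of η_x is a subobject of x ⊗ xᘁ
    have hcoim : Abelian.coimage (η_ x (xᘁ)) ∈ B' :=
      hB'.1.2.1 (Abelian.factorThruCoimage (η_ x (xᘁ))) inferInstance hdual
    have hker' : kernel (η_ x (xᘁ)) ∈ B' := hBB' (hker x hx2)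
    exact hB'unit (hB'.1.2.2.2 _ (aux_coimage_ses (η_ x (xᘁ))) hker' hcoim)
  exact (hBmax.2 ⟨hB', hB₀B.trans hBB', hB'S⟩ hBB').antisymm hBB'
end Balmer
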